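/- If R ∈ A⊗A⊗A satisfies R¹⊗aR²⊗R³ = R¹⊗R²⊗R³a for all a ∈ A, together with R¹R²⊗R³ = 1⊗1 and R²⊗R³R¹ = 1⊗1, then R also satisfies the centralizing conditions R¹⊗R²⊗aR³ = R¹a⊗R²⊗R³ and aR¹⊗R²⊗R³ = R¹⊗R²a⊗R³ for all a ∈ A. -/

import Mathlib

open TensorProduct

section AuxMaps

variable (k A : Type*) [CommRing k] [Ring A] [Algebra k A]

/-- map `u ⊗ v ⊗ w ↦ v ⊗ (w * u)` -/
noncomputable def auxΦ : (A ⊗[k] A) ⊗[k] A →ₗ[k] A ⊗[k] A :=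
  (LinearMap.lTensor A (LinearMap.mul' k A)) ∘ₗ
    (TensorProduct.assoc k A A A).toLinearMap ∘ₗ
      (TensorProduct.comm k A (A ⊗[k] A)).toLinearMap ∘ₗ
        (TensorProduct.assoc k A A A).toLinearMap

lemma auxΦ_tmul (u v w : A) : auxΦ k A (u ⊗ₜ[k] v ⊗ₜ[k] w) = v ⊗ₜ[k] (w * u) := by
  simp [auxΦ]

/-- map `u ⊗ v ⊗ w ↦ v ⊗ w ⊗ u` -/
noncomputable def auxρ : (A ⊗[k] A) ⊗[k] A →ₗ[k] (A ⊗[k] A) ⊗[k] A :=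
  (TensorProduct.assoc k A A A).symm.toLinearMap ∘ₗ
  (TensorProduct.assoc k A A A).toLinearMap ∘ₗ
    (TensorProduct.comm k A (A ⊗[k] A)).toLinearMap ∘ₗ
      (TensorProduct.assoc k A A A).toLinearMap

lemma auxρ_tmul (u v w : A) : auxρ k A (u ⊗ₜ[k] v ⊗ₜ[k] w) = v ⊗ₜ[k] w ⊗ₜ[k] u := by
  simp [auxρ]

end AuxMaps

section Main

variable {k A : Type*} [CommRing k] [Ring A] [Algebra k A]
variable {ι : Type*} {s : Finset ι} {x y z : ι → A}

/-- F2 : `∑ y ⊗ (z * (b * x)) = b ⊗ 1`. -/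
lemma aux_F2
    (hcen : ∀ a : A,
      ∑ i ∈ s, x i ⊗ₜ[k] (a * y i) ⊗ₜ[k] z i
        = ∑ i ∈ s, x i ⊗ₜ[k] y i ⊗ₜ[k] (z i * a))
    (hnorm2 : ∑ i ∈ s, y i ⊗ₜ[k] (z i * x i) = (1 : A) ⊗ₜ[k] (1 : A))
    (b : A) :
    ∑ i ∈ s, y i ⊗ₜ[k] (z i * (b * x i)) = b ⊗ₜ[k] (1 : A) := by
  have h1 := congrArg (⇑(auxΦ k A)) (hcen b)
  simp only [map_sum, auxΦ_tmul, mul_assoc] at h1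
  have h2 := congrArg (⇑(LinearMap.rTensor A (LinearMap.mulLeft k b))) hnorm2
  simp only [map_sum, LinearMap.rTensor_tmul, LinearMap.mulLeft_apply, mul_one] at h2
  rw [← h1]
  exact h2

/-- star : `∑ (x a) ⊗ y ⊗ z = ∑ y ⊗ z ⊗ (a x)`. -/
lemma aux_star
    (hcen : ∀ a : A,
      ∑ i ∈ s, x i ⊗ₜ[k] (a * y i) ⊗ₜ[k] z i
        = ∑ i ∈ s, x i ⊗ₜ[k] y i ⊗ₜ[k] (z i * a))
    (hnorm2 : ∑ i ∈ s, y i ⊗ₜ[k] (z i * x i) = (1 : A) ⊗ₜ[k] (1 : A))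
    (a : A) :
    ∑ i ∈ s, (x i * a) ⊗ₜ[k] y i ⊗ₜ[k] z i
      = ∑ i ∈ s, y i ⊗ₜ[k] z i ⊗ₜ[k] (a * x i) := by
  classical
  -- Step 1 : insert hnorm2
  have e1 : ∑ i ∈ s, (x i * a) ⊗ₜ[k] y i ⊗ₜ[k] z i
      = ∑ j ∈ s, ∑ i ∈ s,
          (x i * (a * y j)) ⊗ₜ[k] (z j * (x j * y i)) ⊗ₜ[k] z i := by
    have h := congrArg
      (⇑((TensorProduct.assoc k A A A).symm.toLinearMap ∘ₗ
        ∑ i ∈ s, TensorProduct.map (LinearMap.mulLeft k (x i * a))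
          (((TensorProduct.mk k A A).flip (z i)) ∘ₗ (LinearMap.mulRight k (y i)))))
      hnorm2
    simp only [map_sum, LinearMap.sum_apply, TensorProduct.map_tmul,
      LinearEquiv.coe_coe, TensorProduct.assoc_symm_tmul,
      LinearMap.comp_apply, LinearMap.mulLeft_apply, LinearMap.mulRight_apply,
      LinearMap.flip_apply, TensorProduct.mk_apply, mul_one, one_mul,
      mul_assoc] at h
    exact h.symm
  -- Step 2 : hcen on i with b = z j * x j
  have e2 : ∀ j ∈ s,
      ∑ i ∈ s, (x i * (a * y j)) ⊗ₜ[k] (z j * (x j * y i)) ⊗ₜ[k] z i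
        = ∑ i ∈ s, (x i * (a * y j)) ⊗ₜ[k] y i ⊗ₜ[k] (z i * (z j * x j)) := by
    intro j _
    have h := congrArg
      (⇑(LinearMap.rTensor A (LinearMap.rTensor A (LinearMap.mulRight k (a * y j)))))
      (hcen (z j * x j))
    simp only [map_sum, LinearMap.rTensor_tmul, LinearMap.mulRight_apply,
      mul_assoc] at h
    exact h
  -- Step 3 : hcen on j with c = x i * a
  have e3' : ∀ i ∈ s,
      ∑ j ∈ s, (x i * (a * y j)) ⊗ₜ[k] y i ⊗ₜ[k] (z i * (z j * x j))
        = ∑ j ∈ s, y j ⊗ₜ[k] y i ⊗ₜ[k] (z i * (z j * (x i * (a * x j)))) := by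
    intro i _
    have h := congrArg
      (⇑((TensorProduct.assoc k A A A).symm.toLinearMap ∘ₗ
          (LinearMap.lTensor A (TensorProduct.mk k A A (y i))) ∘ₗ
          (LinearMap.lTensor A
            ((LinearMap.mul' k A) ∘ₗ (LinearMap.rTensor A (LinearMap.mulLeft k (z i))))) ∘ₗ
          (TensorProduct.assoc k A A A).toLinearMap ∘ₗ
          (auxρ k A)))
      (hcen (x i * a))
    simp only [map_sum, LinearMap.comp_apply, auxρ_tmul, LinearMap.lTensor_tmul,
      LinearEquiv.coe_coe, TensorProduct.assoc_tmul, TensorProduct.assoc_symm_tmul,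
      LinearMap.rTensor_tmul, LinearMap.mul'_apply, LinearMap.mulLeft_apply,
      TensorProduct.mk_apply, mul_assoc] at h
    exact h
  -- Step 4 : collapse with F2
  have e4 : ∀ j ∈ s,
      ∑ i ∈ s, y j ⊗ₜ[k] y i ⊗ₜ[k] (z i * (z j * (x i * (a * x j))))
        = y j ⊗ₜ[k] z j ⊗ₜ[k] (a * x j) := by
    intro j _
    have h := congrArg
      (⇑((TensorProduct.assoc k A A A).symm.toLinearMap ∘ₗ
          (TensorProduct.mk k A (A ⊗[k] A) (y j)) ∘ₗ
          (LinearMap.lTensor A (LinearMap.mulRight k (a * x j)))))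
      (aux_F2 hcen hnorm2 (z j))
    simp only [map_sum, LinearMap.comp_apply, LinearMap.lTensor_tmul,
      LinearEquiv.coe_coe, TensorProduct.assoc_symm_tmul,
      LinearMap.mulRight_apply, TensorProduct.mk_apply, one_mul, mul_assoc] at h
    exact h
  calc
    ∑ i ∈ s, (x i * a) ⊗ₜ[k] y i ⊗ₜ[k] z i
        = ∑ j ∈ s, ∑ i ∈ s,
            (x i * (a * y j)) ⊗ₜ[k] (z j * (x j * y i)) ⊗ₜ[k] z i := e1
    _ = ∑ j ∈ s, ∑ i ∈ s,
            (x i * (a * y j)) ⊗ₜ[k] y i ⊗ₜ[k] (z i * (z j * x j)) :=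
      Finset.sum_congr rfl e2
    _ = ∑ i ∈ s, ∑ j ∈ s,
            (x i * (a * y j)) ⊗ₜ[k] y i ⊗ₜ[k] (z i * (z j * x j)) :=
      Finset.sum_comm
    _ = ∑ i ∈ s, ∑ j ∈ s,
            y j ⊗ₜ[k] y i ⊗ₜ[k] (z i * (z j * (x i * (a * x j)))) :=
      Finset.sum_congr rfl e3'
    _ = ∑ j ∈ s, ∑ i ∈ s,
            y j ⊗ₜ[k] y i ⊗ₜ[k] (z i * (z j * (x i * (a * x j)))) :=
      Finset.sum_comm
    _ = ∑ j ∈ s, y j ⊗ₜ[k] z j ⊗ₜ[k] (a * x j) := Finset.sum_congr rfl e4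

/-- cyclicity -/
lemma aux_cyclic
    (hcen : ∀ a : A,
      ∑ i ∈ s, x i ⊗ₜ[k] (a * y i) ⊗ₜ[k] z i
        = ∑ i ∈ s, x i ⊗ₜ[k] y i ⊗ₜ[k] (z i * a))
    (hnorm2 : ∑ i ∈ s, y i ⊗ₜ[k] (z i * x i) = (1 : A) ⊗ₜ[k] (1 : A)) :
    ∑ i ∈ s, x i ⊗ₜ[k] y i ⊗ₜ[k] z i = ∑ i ∈ s, y i ⊗ₜ[k] z i ⊗ₜ[k] x i := by
  have h := aux_star hcen hnorm2 1
  simpa only [mul_one, one_mul] using h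

/-- first goal -/
lemma aux_G1
    (hcen : ∀ a : A,
      ∑ i ∈ s, x i ⊗ₜ[k] (a * y i) ⊗ₜ[k] z i
        = ∑ i ∈ s, x i ⊗ₜ[k] y i ⊗ₜ[k] (z i * a))
    (hnorm2 : ∑ i ∈ s, y i ⊗ₜ[k] (z i * x i) = (1 : A) ⊗ₜ[k] (1 : A))
    (a : A) :
    ∑ i ∈ s, x i ⊗ₜ[k] y i ⊗ₜ[k] (a * z i)
      = ∑ i ∈ s, (x i * a) ⊗ₜ[k] y i ⊗ₜ[k] z i := by
  have h := congrArg
    (⇑(LinearMap.lTensor (A ⊗[k] A) (LinearMap.mulLeft k a)))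
    (aux_cyclic hcen hnorm2)
  simp only [map_sum, LinearMap.lTensor_tmul, LinearMap.mulLeft_apply] at h
  exact h.trans (aux_star hcen hnorm2 a).symm

/-- rotated hcen : hcen for family (y, z, x) -/
lemma aux_hcen_rot
    (hcen : ∀ a : A,
      ∑ i ∈ s, x i ⊗ₜ[k] (a * y i) ⊗ₜ[k] z i
        = ∑ i ∈ s, x i ⊗ₜ[k] y i ⊗ₜ[k] (z i * a))
    (hnorm2 : ∑ i ∈ s, y i ⊗ₜ[k] (z i * x i) = (1 : A) ⊗ₜ[k] (1 : A))
    (a : A) :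
    ∑ i ∈ s, y i ⊗ₜ[k] (a * z i) ⊗ₜ[k] x i
      = ∑ i ∈ s, y i ⊗ₜ[k] z i ⊗ₜ[k] (x i * a) := by
  have h := congrArg (⇑(auxρ k A)) (aux_G1 hcen hnorm2 a)
  simp only [map_sum, auxρ_tmul] at h
  exact h

/-- rotated hnorm2 : hnorm2 for family (y, z, x) -/
lemma aux_hnorm2_rot
    (hcen : ∀ a : A,
      ∑ i ∈ s, x i ⊗ₜ[k] (a * y i) ⊗ₜ[k] z i
        = ∑ i ∈ s, x i ⊗ₜ[k] y i ⊗ₜ[k] (z i * a))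
    (hnorm2 : ∑ i ∈ s, y i ⊗ₜ[k] (z i * x i) = (1 : A) ⊗ₜ[k] (1 : A)) :
    ∑ i ∈ s, z i ⊗ₜ[k] (x i * y i) = (1 : A) ⊗ₜ[k] (1 : A) := by
  have h := congrArg (⇑(auxΦ k A)) (aux_cyclic hcen hnorm2)
  simp only [map_sum, auxΦ_tmul] at h
  rw [← h]
  exact hnorm2

end Main

/-- If `R ∈ A ⊗ A ⊗ A` satisfies `R¹ ⊗ aR² ⊗ R³ = R¹ ⊗ R² ⊗ R³a` for all
`a ∈ A`, together with `R¹R² ⊗ R³ = 1 ⊗ 1` and `R² ⊗ R³R¹ = 1 ⊗ 1`, then `R` also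
satisfies the centralizing conditions `R¹ ⊗ R² ⊗ aR³ = R¹a ⊗ R² ⊗ R³` and
`aR¹ ⊗ R² ⊗ R³ = R¹ ⊗ R²a ⊗ R³` for all `a ∈ A`. -/
theorem other_centralizing_conditions_of_R_matrix
    (k A : Type*) [CommRing k] [Ring A] [Algebra k A]
    (ι : Type*) (s : Finset ι) (x y z : ι → A)
    (hcen : ∀ a : A,
      ∑ i ∈ s, x i ⊗ₜ[k] (a * y i) ⊗ₜ[k] z i
        = ∑ i ∈ s, x i ⊗ₜ[k] y i ⊗ₜ[k] (z i * a))
    (hnorm1 : ∑ i ∈ s, (x i * y i) ⊗ₜ[k] z i = (1 : A) ⊗ₜ[k] (1 : A))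
    (hnorm2 : ∑ i ∈ s, y i ⊗ₜ[k] (z i * x i) = (1 : A) ⊗ₜ[k] (1 : A)) :
    (∀ a : A,
      ∑ i ∈ s, x i ⊗ₜ[k] y i ⊗ₜ[k] (a * z i)
        = ∑ i ∈ s, (x i * a) ⊗ₜ[k] y i ⊗ₜ[k] z i) ∧
    (∀ a : A,
      ∑ i ∈ s, (a * x i) ⊗ₜ[k] y i ⊗ₜ[k] z i
        = ∑ i ∈ s, x i ⊗ₜ[k] (y i * a) ⊗ₜ[k] z i) := by
  constructor
  · exact aux_G1 hcen hnorm2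
  · intro a
    -- family (y, z, x) satisfies hcen and hnorm2
    have hc' := aux_hcen_rot hcen hnorm2
    have hn2' := aux_hnorm2_rot hcen hnorm2
    -- hence hcen for family (z, x, y):
    have hc'' := aux_hcen_rot (x := y) (y := z) (z := x) hc' hn2' a
    -- rotate it back
    have h := congrArg (⇑(auxρ k A)) hc''
    simp only [map_sum, auxρ_tmul] at h
    exact h
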